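/- Let q ≥ 1, let M be a row-stochastic q×q matrix, and let k ≥ 2 be an integer such that the matrix power M^k has rank one. Fix integers d ≥ 2 and ℓ ≥ 1, let μ be the broadcast process on the complete d-ary tree of depth ℓ with transition matrix M and an arbitrary root prior ν, and let S be a subset of the set L of leaves with |S| < 2^{⌊(ℓ−1)/(k−1)⌋}. Then the random vector X_S = (X_v)_{v∈S} is independent of the root value X_ρ under μ. -/

import Mathlib

open Finset

/-- A finite rooted tree: a finite vertex set with a root, a parent map, and a depth
function witnessing acyclicity (edges are directed from parent to child; the edge set is
`{(par v, v) : v ≠ root}`). -/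
structure FiniteRootedTree where
  V : Type
  fintypeV : Fintype V
  decEqV : DecidableEq V
  root : V
  par : V → V
  depth : V → ℕ
  par_root : par root = root
  depth_root : depth root = 0
  depth_par : ∀ v, v ≠ root → depth v = depth (par v) + 1

attribute [instance] FiniteRootedTree.fintypeV FiniteRootedTree.decEqV

/-- `M` is a row-stochastic `q × q` matrix. -/
def RowStochastic {q : ℕ} (M : Matrix (Fin q) (Fin q) ℝ) : Prop :=
  (∀ i j, 0 ≤ M i j) ∧ ∀ i, ∑ j, M i j = 1

/-- `ν` is a probability distribution on `Fin q`. -/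
def IsProbVec {q : ℕ} (ν : Fin q → ℝ) : Prop :=
  (∀ c, 0 ≤ ν c) ∧ ∑ c, ν c = 1

/-- `M` is ergodic: some power of `M` has all entries strictly positive. -/
def IsErgodicMatrix {q : ℕ} (M : Matrix (Fin q) (Fin q) ℝ) : Prop :=
  ∃ n, 1 ≤ n ∧ ∀ i j, 0 < (M ^ n) i j

/-- The point mass at `c` as a distribution on `Fin q`. -/
def deltaPrior {q : ℕ} (c : Fin q) : Fin q → ℝ := fun c' => if c' = c then 1 else 0

/-- The probability that the broadcast process on `T` with transition matrix `M` and root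
prior `ν` assigns to the configuration `x : T.V → Fin q`, namely
`ν (x ρ) * ∏_{(u,v) ∈ E} M (x u) (x v)`. -/
noncomputable def bcast {q : ℕ} (M : Matrix (Fin q) (Fin q) ℝ) (T : FiniteRootedTree)
    (ν : Fin q → ℝ) (x : T.V → Fin q) : ℝ :=
  ν (x T.root) * ∏ v ∈ Finset.univ.filter (fun v => v ≠ T.root), M (x (T.par v)) (x v)

/-- The marginal probability that `X_u = c` under the broadcast process. -/
noncomputable def marg {q : ℕ} (M : Matrix (Fin q) (Fin q) ℝ) (T : FiniteRootedTree)
    (ν : Fin q → ℝ) (u : T.V) (c : Fin q) : ℝ :=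
  ∑ x : T.V → Fin q, bcast M T ν x * (if x u = c then 1 else 0)

/-- Vertices of the complete `d`-ary tree of depth `ℓ`: sequences of directions of
length at most `ℓ`. -/
abbrev daryV (d ℓ : ℕ) : Type := (i : Fin (ℓ + 1)) × (Fin (i : ℕ) → Fin d)

def daryRoot (d ℓ : ℕ) : daryV d ℓ := ⟨⟨0, Nat.succ_pos ℓ⟩, fun j => j.elim0⟩

def daryPar (d ℓ : ℕ) (v : daryV d ℓ) : daryV d ℓ :=
  if _h : (v.1 : ℕ) = 0 then v
  else ⟨⟨(v.1 : ℕ) - 1, lt_of_le_of_lt (Nat.sub_le _ _) v.1.isLt⟩,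
    fun j => v.2 ⟨(j : ℕ), lt_of_lt_of_le j.isLt (Nat.sub_le _ _)⟩⟩

theorem dary_par_root (d ℓ : ℕ) : daryPar d ℓ (daryRoot d ℓ) = daryRoot d ℓ :=
  dif_pos rfl

theorem dary_depth_par (d ℓ : ℕ) (v : daryV d ℓ) (hv : v ≠ daryRoot d ℓ) :
    (v.1 : ℕ) = ((daryPar d ℓ v).1 : ℕ) + 1 := by
  have h0 : (v.1 : ℕ) ≠ 0 := by
    obtain ⟨⟨i, hi⟩, f⟩ := v
    intro h
    apply hv
    have hi0 : i = 0 := h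
    subst hi0
    have hf : f = fun j => j.elim0 := funext fun j => j.elim0
    subst hf
    rfl
  unfold daryPar
  rw [dif_neg h0]
  show (v.1 : ℕ) = (v.1 : ℕ) - 1 + 1
  omega

/-- The complete `d`-ary tree of depth `ℓ` (every non-leaf vertex has exactly `d`
children and all leaves are at depth `ℓ`). -/
def Dary (d ℓ : ℕ) : FiniteRootedTree where
  V := daryV d ℓ
  fintypeV := inferInstance
  decEqV := inferInstance
  root := daryRoot d ℓ
  par := daryPar d ℓ
  depth := fun v => (v.1 : ℕ)
  par_root := dary_par_root d ℓ
  depth_root := rfl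
  depth_par := dary_depth_par d ℓ

/-- The set `L` of leaves of the complete `d`-ary tree of depth `ℓ` (vertices at depth `ℓ`). -/
abbrev DaryLeaves (d ℓ : ℕ) := {v : (Dary d ℓ).V // (Dary d ℓ).depth v = ℓ}

namespace BCproof

variable {d ℓ : ℕ}

abbrev dep (v : daryV d ℓ) : ℕ := (v.1 : ℕ)

def emb (n : ℕ) (hn : n ≤ ℓ) (s : Fin n → Fin d) : daryV d ℓ := ⟨⟨n, by omega⟩, s⟩

@[simp] lemma dep_emb (n : ℕ) (hn : n ≤ ℓ) (s : Fin n → Fin d) : dep (emb n hn s) = n := rfl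

lemma dep_le (v : daryV d ℓ) : dep v ≤ ℓ := Nat.lt_succ_iff.mp v.1.isLt

def child (u : daryV d ℓ) (h : dep u < ℓ) (j : Fin d) : daryV d ℓ :=
  ⟨⟨dep u + 1, by omega⟩, Fin.snoc u.2 j⟩

@[simp] lemma dep_child (u : daryV d ℓ) (h : dep u < ℓ) (j : Fin d) :
    dep (child u h j) = dep u + 1 := rfl

lemma emb_eta (v : daryV d ℓ) {n : ℕ} (h : dep v = n) (hn : n ≤ ℓ) :
    emb n hn (fun i => v.2 (Fin.cast h.symm i)) = v := by
  rcases v with ⟨⟨i, hi⟩, f⟩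
  simp only [dep] at h
  subst h
  exact Sigma.ext rfl (heq_of_eq (funext fun j => congrArg f (Fin.ext rfl)))

lemma child_emb (n : ℕ) (hn : n + 1 ≤ ℓ) (s : Fin n → Fin d) (j : Fin d) :
    child (emb n (by omega) s) (by simp; omega) j = emb (n+1) hn (Fin.snoc s j) := rfl

lemma par_emb (n : ℕ) (hn : n + 1 ≤ ℓ) (s : Fin (n+1) → Fin d) :
    daryPar d ℓ (emb (n+1) hn s) = emb n (by omega) (fun i => s i.castSucc) := by
  unfold daryPar emb
  rw [dif_neg (by simp)]
  refine Sigma.ext (by simp) ?_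
  refine (Fin.heq_fun_iff (by simp)).2 fun i => ?_
  exact congrArg s (Fin.ext rfl)

lemma eq_root_iff (v : daryV d ℓ) : v = daryRoot d ℓ ↔ dep v = 0 := by
  constructor
  · rintro rfl; rfl
  · intro h
    rcases v with ⟨⟨i, hi⟩, f⟩
    simp only [dep] at h
    subst h
    exact Sigma.ext rfl (heq_of_eq (funext fun j => j.elim0))

lemma dep_par (v : daryV d ℓ) (h : 0 < dep v) : dep (daryPar d ℓ v) = dep v - 1 := by
  unfold daryPar
  rw [dif_neg (Nat.pos_iff_ne_zero.mp h)]

lemma dep_par_ge (v : daryV d ℓ) {n : ℕ} (h : n + 1 ≤ dep v) : n ≤ dep (daryPar d ℓ v) := by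
  rw [dep_par v (by omega)]; omega


abbrev Hi (d ℓ : ℕ) (n : ℕ) : Type := {v : daryV d ℓ // n < dep v}

/-- split `Hi n` into level `n+1` and `Hi (n+1)` -/
def ESplit (n : ℕ) (hn : n + 1 ≤ ℓ) : ((Fin (n+1) → Fin d) ⊕ Hi d ℓ (n+1)) ≃ Hi d ℓ n where
  toFun := Sum.elim (fun s => ⟨emb (n+1) hn s, Nat.lt_succ_self n⟩)
    (fun v => ⟨v.1, by have := v.2; omega⟩)
  invFun := fun v => if h : dep v.1 = n + 1 then
      Sum.inl (fun i => v.1.2 (Fin.cast h.symm i))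
    else Sum.inr ⟨v.1, by have := v.2; omega⟩
  left_inv := by
    rintro (s | v)
    · simp only [Sum.elim_inl]
      exact (dif_pos (rfl : dep (emb (n+1) hn s) = n+1)).trans
        (congrArg Sum.inl (funext fun i => congrArg s (Fin.ext rfl)))
    · simp only [Sum.elim_inr]
      exact (dif_neg (show ¬ dep v.1 = n + 1 by have := v.2; omega)).trans rfl
  right_inv := by
    intro v
    simp only
    split
    next h => exact Subtype.ext (emb_eta v.1 h hn)
    next h => rfl

/-- merged coloring -/
def mergeC {q : ℕ} (n : ℕ) (hn : n + 1 ≤ ℓ) (y : (Fin (n+1) → Fin d) → Fin q)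
    (z : Hi d ℓ (n+1) → Fin q) : Hi d ℓ n → Fin q :=
  fun v => Sum.elim y z ((ESplit n hn).symm v)

lemma sum_split {q : ℕ} (n : ℕ) (hn : n + 1 ≤ ℓ) (G : (Hi d ℓ n → Fin q) → ℝ) :
    ∑ x : Hi d ℓ n → Fin q, G x
      = ∑ y : (Fin (n+1) → Fin d) → Fin q, ∑ z : Hi d ℓ (n+1) → Fin q,
          G (mergeC n hn y z) := by
  rw [← Equiv.sum_comp ((Equiv.sumArrowEquivProdArrow _ _ (Fin q)).symm.trans
    (Equiv.arrowCongr (ESplit n hn) (Equiv.refl (Fin q)))) G, Fintype.sum_prod_type]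
  exact Finset.sum_congr rfl fun y _ => Finset.sum_congr rfl fun z _ => rfl

lemma prod_split (n : ℕ) (hn : n + 1 ≤ ℓ) (f : Hi d ℓ n → ℝ) :
    ∏ v : Hi d ℓ n, f v
      = (∏ s : Fin (n+1) → Fin d, f ⟨emb (n+1) hn s, Nat.lt_succ_self n⟩)
        * ∏ v : Hi d ℓ (n+1), f ⟨v.1, by have := v.2; omega⟩ := by
  rw [← Equiv.prod_comp (ESplit n hn) f, Fintype.prod_sum_type]
  rfl

/-- root-level split of full colorings -/
def rootEquiv (q : ℕ) : (Fin q × (Hi d ℓ 0 → Fin q)) ≃ (daryV d ℓ → Fin q) where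
  toFun := fun p v => if h : 0 < dep v then p.2 ⟨v, h⟩ else p.1
  invFun := fun x => (x (daryRoot d ℓ), fun v => x v.1)
  left_inv := by
    rintro ⟨c, x⟩
    refine Prod.ext ?_ ?_
    · simp only
      split
      next h => exact absurd h (by simp [daryRoot, dep])
      next h => rfl
    · simp only
      funext v
      split
      next h => rfl
      next h => exact absurd v.2 h
  right_inv := by
    intro x
    funext v
    simp only
    split
    next h => rfl
    next h =>
      have hv : v = daryRoot d ℓ := (eq_root_iff v).2 (by omega)
      rw [hv]

lemma sum_root_split {q : ℕ} (G : (daryV d ℓ → Fin q) → ℝ) :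
    ∑ x : daryV d ℓ → Fin q, G x
      = ∑ c : Fin q, ∑ x : Hi d ℓ 0 → Fin q,
          G (fun v => if h : 0 < dep v then x ⟨v, h⟩ else c) := by
  rw [← Equiv.sum_comp (rootEquiv q) G, Fintype.sum_prod_type]
  rfl


section FF
variable {q : ℕ} (M : Matrix (Fin q) (Fin q) ℝ) (w : daryV d ℓ → Fin q → ℝ)

noncomputable def fF : ℕ → daryV d ℓ → Fin q → ℝ
  | 0, u, a => w u a
  | (m+1), u, a =>
      if h : dep u < ℓ then ∏ j : Fin d, ∑ b : Fin q, M a b * fF m (child u h j) b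
      else w u a

noncomputable def FF (u : daryV d ℓ) : Fin q → ℝ := fF M w (ℓ - dep u) u

lemma FF_leaf (u : daryV d ℓ) (h : dep u = ℓ) (a : Fin q) : FF M w u a = w u a := by
  unfold FF
  rw [h, Nat.sub_self]
  rfl

lemma FF_node (u : daryV d ℓ) (h : dep u < ℓ) (a : Fin q) :
    FF M w u a = ∏ j : Fin d, ∑ b : Fin q, M a b * FF M w (child u h j) b := by
  unfold FF
  obtain ⟨m, hm⟩ : ∃ m, ℓ - dep u = m + 1 := ⟨ℓ - dep u - 1, by omega⟩
  rw [hm]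
  show (if h : dep u < ℓ then ∏ j : Fin d, ∑ b : Fin q, M a b * fF M w m (child u h j) b
      else w u a) = _
  rw [dif_pos h]
  refine Finset.prod_congr rfl fun j _ => Finset.sum_congr rfl fun b _ => ?_
  have hm2 : m = ℓ - dep (child u h j) := by simp only [dep_child]; omega
  rw [hm2]

lemma fF_one (hM : ∀ i, ∑ j, M i j = 1) :
    ∀ (m : ℕ) (u : daryV d ℓ) (a : Fin q), fF M (fun _ _ => (1:ℝ)) m u a = 1 := by
  intro m
  induction m with
  | zero => intro u a; rfl
  | succ m ih =>
    intro u a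
    show (if h : dep u < ℓ then ∏ j : Fin d, ∑ b : Fin q,
        M a b * fF M (fun _ _ => (1:ℝ)) m (child u h j) b else 1) = 1
    split
    next h => simp [ih, hM]
    next h => rfl

lemma FF_one (hM : ∀ i, ∑ j, M i j = 1) (u : daryV d ℓ) (a : Fin q) :
    FF M (fun _ _ => (1:ℝ)) u a = 1 := fF_one M hM _ u a

end FF

section Atot
variable {q : ℕ} (hd0 : 0 < d)

def Atot (n : ℕ) (z : (Fin n → Fin d) → Fin q) (x : Hi d ℓ n → Fin q) (v : daryV d ℓ) :
    Fin q :=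
  if h : n < dep v then x ⟨v, h⟩
  else z (fun i => if h2 : (i : ℕ) < dep v then v.2 ⟨i, h2⟩ else ⟨0, hd0⟩)

lemma Atot_hi (n : ℕ) (z : (Fin n → Fin d) → Fin q) (x : Hi d ℓ n → Fin q) (v : daryV d ℓ)
    (h : n < dep v) : Atot hd0 n z x v = x ⟨v, h⟩ := dif_pos h

lemma Atot_emb_self (n : ℕ) (hn : n ≤ ℓ) (z : (Fin n → Fin d) → Fin q)
    (x : Hi d ℓ n → Fin q) (t : Fin n → Fin d) :
    Atot hd0 n z x (emb n hn t) = z t := by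
  unfold Atot
  rw [dif_neg (by simp)]
  congr 1
  funext i
  rw [dif_pos (by simpa using i.2)]
  exact congrArg t (Fin.ext rfl)

lemma Atot_merge (n : ℕ) (hn1 : n + 1 ≤ ℓ) (z : (Fin n → Fin d) → Fin q)
    (y : (Fin (n+1) → Fin d) → Fin q) (z' : Hi d ℓ (n+1) → Fin q) :
    ∀ v : daryV d ℓ, n + 1 ≤ dep v →
      Atot hd0 n z (mergeC n hn1 y z') v = Atot hd0 (n+1) y z' v := by
  intro v hv
  by_cases h : dep v = n + 1
  · rw [Atot_hi hd0 n z _ v (by omega)]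
    unfold mergeC
    show Sum.elim y z' ((ESplit n hn1).symm ⟨v, by omega⟩) = _
    have : ((ESplit n hn1).symm ⟨v, by omega⟩)
        = Sum.inl (fun i => v.2 (Fin.cast h.symm i)) := by
      simp only [ESplit, Equiv.coe_fn_symm_mk]
      rw [dif_pos h]
    rw [this]
    unfold Atot
    rw [dif_neg (by omega)]
    simp only [Sum.elim_inl]
    congr 1
    funext i
    rw [dif_pos (by omega)]
    exact congrArg v.2 (Fin.ext rfl)
  · have h' : n + 1 < dep v := by omega
    rw [Atot_hi hd0 n z _ v (by omega), Atot_hi hd0 (n+1) y z' v h']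
    unfold mergeC
    show Sum.elim y z' ((ESplit n hn1).symm ⟨v, by omega⟩) = _
    have : ((ESplit n hn1).symm ⟨v, by omega⟩) = Sum.inr ⟨v, h'⟩ := by
      simp only [ESplit, Equiv.coe_fn_symm_mk]
      rw [dif_neg h]
    rw [this]
    rfl

end Atot

section Claim
variable {q : ℕ} (M : Matrix (Fin q) (Fin q) ℝ) (w : daryV d ℓ → Fin q → ℝ) (hd0 : 0 < d)

noncomputable def lhsB (n : ℕ) (z : (Fin n → Fin d) → Fin q) : ℝ :=
  ∑ x : Hi d ℓ n → Fin q,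
    (∏ v : Hi d ℓ n, M (Atot hd0 n z x (daryPar d ℓ v.1)) (Atot hd0 n z x v.1)) *
    ∏ s : Fin ℓ → Fin d, w (emb ℓ le_rfl s) (Atot hd0 n z x (emb ℓ le_rfl s))

theorem claimF : ∀ (m n : ℕ) (hnm : n + m = ℓ) (z : (Fin n → Fin d) → Fin q),
    lhsB M w hd0 n z = ∏ s : Fin n → Fin d, FF M w (emb n (by omega) s) (z s) := by
  intro m
  induction m with
  | zero =>
    intro n hnm z
    have hn : ℓ = n := by omega
    subst hn
    haveI : IsEmpty (Hi d ℓ ℓ) := ⟨fun v => absurd v.2 (by have := dep_le v.1; omega)⟩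
    haveI : Unique (Hi d ℓ ℓ → Fin q) := Pi.uniqueOfIsEmpty _
    unfold lhsB
    rw [Fintype.sum_unique, Finset.univ_eq_empty (α := Hi d ℓ ℓ), Finset.prod_empty, one_mul]
    refine Finset.prod_congr rfl fun s _ => ?_
    rw [Atot_emb_self hd0 ℓ le_rfl z default s, FF_leaf M w _ rfl]
  | succ m ih =>
    intro n hnm z
    have hn1 : n + 1 ≤ ℓ := by omega
    unfold lhsB
    rw [sum_split n hn1]
    have step : ∀ (y : (Fin (n+1) → Fin d) → Fin q) (z' : Hi d ℓ (n+1) → Fin q),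
        ((∏ v : Hi d ℓ n, M (Atot hd0 n z (mergeC n hn1 y z') (daryPar d ℓ v.1))
            (Atot hd0 n z (mergeC n hn1 y z') v.1)) *
          ∏ s : Fin ℓ → Fin d, w (emb ℓ le_rfl s)
            (Atot hd0 n z (mergeC n hn1 y z') (emb ℓ le_rfl s)))
        = (∏ s : Fin (n+1) → Fin d, M (z (fun i => s i.castSucc)) (y s)) *
          ((∏ v : Hi d ℓ (n+1), M (Atot hd0 (n+1) y z' (daryPar d ℓ v.1))
              (Atot hd0 (n+1) y z' v.1)) *
            ∏ s : Fin ℓ → Fin d, w (emb ℓ le_rfl s)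
              (Atot hd0 (n+1) y z' (emb ℓ le_rfl s))) := by
      intro y z'
      rw [prod_split n hn1]
      rw [mul_assoc]
      congr 1
      · refine Finset.prod_congr rfl fun s _ => ?_
        rw [par_emb n hn1 s, Atot_emb_self hd0 n (by omega) z _ _,
          Atot_merge hd0 n hn1 z y z' _ (by simp), Atot_emb_self hd0 (n+1) hn1 y z' s]
      · congr 1
        · refine Finset.prod_congr rfl fun v _ => ?_
          show M (Atot hd0 n z (mergeC n hn1 y z') (daryPar d ℓ v.1))
              (Atot hd0 n z (mergeC n hn1 y z') v.1) = _
          rw [Atot_merge hd0 n hn1 z y z' v.1 (by have := v.2; omega),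
            Atot_merge hd0 n hn1 z y z' (daryPar d ℓ v.1)
              (dep_par_ge v.1 (by have := v.2; omega))]
        · refine Finset.prod_congr rfl fun s _ => ?_
          rw [Atot_merge hd0 n hn1 z y z' _ (by simp; omega)]
    calc ∑ y : (Fin (n+1) → Fin d) → Fin q, ∑ z' : Hi d ℓ (n+1) → Fin q,
          ((∏ v : Hi d ℓ n, M (Atot hd0 n z (mergeC n hn1 y z') (daryPar d ℓ v.1))
            (Atot hd0 n z (mergeC n hn1 y z') v.1)) *
          ∏ s : Fin ℓ → Fin d, w (emb ℓ le_rfl s)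
            (Atot hd0 n z (mergeC n hn1 y z') (emb ℓ le_rfl s)))
        = ∑ y : (Fin (n+1) → Fin d) → Fin q,
            (∏ s : Fin (n+1) → Fin d, M (z (fun i => s i.castSucc)) (y s)) *
              lhsB M w hd0 (n+1) y := by
          refine Finset.sum_congr rfl fun y _ => ?_
          refine (Finset.sum_congr rfl fun z' _ => step y z').trans ?_
          rw [← Finset.mul_sum]
          rfl
      _ = ∑ y : (Fin (n+1) → Fin d) → Fin q,
            ∏ s : Fin (n+1) → Fin d,
              (M (z (fun i => s i.castSucc)) (y s) * FF M w (emb (n+1) hn1 s) (y s)) := by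
          refine Finset.sum_congr rfl fun y _ => ?_
          rw [ih (n+1) (by omega) y, ← Finset.prod_mul_distrib]
      _ = ∏ s : Fin (n+1) → Fin d,
            ∑ b : Fin q, M (z (fun i => s i.castSucc)) b * FF M w (emb (n+1) hn1 s) b := by
          rw [Finset.prod_univ_sum (fun _ => (Finset.univ : Finset (Fin q)))
            (fun s b => M (z (fun i => s i.castSucc)) b * FF M w (emb (n+1) hn1 s) b),
            Fintype.piFinset_univ]
      _ = ∏ t : Fin n → Fin d, FF M w (emb n (by omega) t) (z t) := by
          rw [← Equiv.prod_comp (Fin.snocEquiv (fun _ => Fin d))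
              (fun s => ∑ b : Fin q, M (z (fun i => s i.castSucc)) b
                * FF M w (emb (n+1) hn1 s) b),
            Fintype.prod_prod_type, Finset.prod_comm]
          refine Finset.prod_congr rfl fun t _ => ?_
          rw [FF_node M w (emb n (show n ≤ ℓ by omega) t) (show n < ℓ by omega) (z t)]
          refine Finset.prod_congr rfl fun j _ => ?_
          have hs : (Fin.snocEquiv (fun _ => Fin d)) (j, t) = Fin.snoc t j := rfl
          rw [hs]
          have h1 : (fun i : Fin n => (Fin.snoc t j : Fin (n+1) → Fin d) i.castSucc) = t := by
            funext i
            exact @Fin.snoc_castSucc n (fun _ => Fin d) j t i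
          rw [h1, ← child_emb n hn1 t j]
end Claim

section Count

def pref (u v : daryV d ℓ) : Prop :=
  ∃ h : dep u ≤ dep v, ∀ i : Fin (dep u), v.2 (Fin.castLE h i) = u.2 i

instance (u v : daryV d ℓ) : Decidable (pref u v) :=
  if h : dep u ≤ dep v then
    decidable_of_iff (∀ i : Fin (dep u), v.2 (Fin.castLE h i) = u.2 i)
      ⟨fun hp => ⟨h, hp⟩, fun ⟨h', hp⟩ i => (congrArg v.2 (Fin.ext rfl)).trans (hp i)⟩
  else isFalse (fun hp => h hp.1)

lemma pref_refl (u : daryV d ℓ) : pref u u :=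
  ⟨le_rfl, fun i => congrArg u.2 (Fin.ext rfl)⟩

lemma pref_root (hℓpos : True) (v : daryV d ℓ) : pref (daryRoot d ℓ) v :=
  ⟨Nat.zero_le _, fun i => i.elim0⟩

lemma pref_child {u : daryV d ℓ} (h : dep u < ℓ) (j : Fin d) (v : daryV d ℓ) :
    pref (child u h j) v → pref u v := by
  rintro ⟨h1, h2⟩
  have h1' : dep u + 1 ≤ dep v := h1
  refine ⟨by omega, fun i => ?_⟩
  have h3 : v.2 (Fin.castLE h1 i.castSucc) = (Fin.snoc u.2 j : Fin (dep u + 1) → Fin d) i.castSucc :=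
    h2 i.castSucc
  rw [@Fin.snoc_castSucc (dep u) (fun _ => Fin d) j u.2 i] at h3
  exact (congrArg v.2 (Fin.ext rfl)).trans h3

lemma pref_child_disj {u : daryV d ℓ} (h : dep u < ℓ) {j j' : Fin d} (v : daryV d ℓ)
    (p1 : pref (child u h j) v) (p2 : pref (child u h j') v) : j = j' := by
  obtain ⟨h1, h2⟩ := p1
  obtain ⟨h1', h2'⟩ := p2
  have e1 : v.2 (Fin.castLE h1 (Fin.last (dep u))) = j := by
    have := h2 (Fin.last (dep u))
    rwa [show (child u h j).2 (Fin.last (dep u)) = j from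
      @Fin.snoc_last (dep u) (fun _ => Fin d) j u.2] at this
  have e2 : v.2 (Fin.castLE h1' (Fin.last (dep u))) = j' := by
    have := h2' (Fin.last (dep u))
    rwa [show (child u h j').2 (Fin.last (dep u)) = j' from
      @Fin.snoc_last (dep u) (fun _ => Fin d) j' u.2] at this
  rw [← e1, ← e2]
  exact congrArg v.2 (Fin.ext rfl)

def cnt (S : Finset (daryV d ℓ)) (u : daryV d ℓ) : ℕ :=
  (S.filter (fun v => pref u v)).card

lemma cnt_child_le (S : Finset (daryV d ℓ)) {u : daryV d ℓ} (h : dep u < ℓ) (j : Fin d) :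
    cnt S (child u h j) ≤ cnt S u := by
  apply Finset.card_le_card
  intro v hv
  rw [Finset.mem_filter] at hv ⊢
  exact ⟨hv.1, pref_child h j v hv.2⟩

lemma cnt_two_children (S : Finset (daryV d ℓ)) {u : daryV d ℓ} (h : dep u < ℓ)
    {j j' : Fin d} (hjj : j ≠ j') :
    cnt S (child u h j) + cnt S (child u h j') ≤ cnt S u := by
  have hdisj : Disjoint (S.filter (fun v => pref (child u h j) v))
      (S.filter (fun v => pref (child u h j') v)) := by
    rw [Finset.disjoint_left]
    intro v hv1 hv2
    rw [Finset.mem_filter] at hv1 hv2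
    exact hjj (pref_child_disj h v hv1.2 hv2.2)
  have hsub : (S.filter (fun v => pref (child u h j) v))
      ∪ (S.filter (fun v => pref (child u h j') v)) ⊆ S.filter (fun v => pref u v) := by
    apply Finset.union_subset <;>
    · intro v hv
      rw [Finset.mem_filter] at hv ⊢
      exact ⟨hv.1, pref_child h _ v hv.2⟩
  calc cnt S (child u h j) + cnt S (child u h j')
      = ((S.filter (fun v => pref (child u h j) v))
          ∪ (S.filter (fun v => pref (child u h j') v))).card :=
        (Finset.card_union_of_disjoint hdisj).symm
    _ ≤ cnt S u := Finset.card_le_card hsub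

lemma cnt_root (S : Finset (daryV d ℓ)) : cnt S (daryRoot d ℓ) = S.card := by
  unfold cnt
  rw [Finset.filter_true_of_mem (fun v _ => pref_root trivial v)]

lemma cnt_mem (S : Finset (daryV d ℓ)) {u : daryV d ℓ} (hu : u ∈ S) : 1 ≤ cnt S u :=
  Finset.card_pos.2 ⟨u, Finset.mem_filter.2 ⟨hu, pref_refl u⟩⟩

end Count

section Key
variable {q : ℕ}

/-- leaf weights from the observation -/
def wS (S : Finset (daryV d ℓ)) (y : daryV d ℓ → Fin q) : daryV d ℓ → Fin q → ℝ :=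
  fun v a => if v ∈ S then (if a = y v then 1 else 0) else 1

lemma rows_const_pow (M : Matrix (Fin q) (Fin q) ℝ) (k : ℕ)
    (hMk : ∀ i i' j, (M^k) i j = (M^k) i' j) (t : ℕ) (ht : k ≤ t) :
    ∀ i i' j, (M^t) i j = (M^t) i' j := by
  obtain ⟨r, rfl⟩ : ∃ r, t = k + r := ⟨t - k, by omega⟩
  intro i i' j
  rw [pow_add, Matrix.mul_apply, Matrix.mul_apply]
  exact Finset.sum_congr rfl fun b _ => by rw [hMk i i' b]

lemma arith_step (k : ℕ) (hk : 2 ≤ k) (m : ℕ) :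
    (m + (k-2)) / (k-1) ≤ (m - (k-1) + (k-2)) / (k-1) + 1 := by
  by_cases hm : k - 1 ≤ m
  · have h1 : m + (k-2) = (m - (k-1) + (k-2)) + (k-1) := by omega
    rw [h1, Nat.add_div_right _ (by omega)]
  · have h2 : (m + (k-2)) / (k-1) < 2 :=
      (Nat.div_lt_iff_lt_mul (by omega)).2 (by omega)
    exact le_trans (by omega : (m + (k-2)) / (k-1) ≤ 1) (Nat.succ_le_succ (Nat.zero_le _))

theorem key (M : Matrix (Fin q) (Fin q) ℝ) (hM : ∀ i, ∑ j, M i j = 1) (hq : 1 ≤ q)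
    (k : ℕ) (hk : 2 ≤ k) (hMk : ∀ i i' j, (M^k) i j = (M^k) i' j)
    (S : Finset (daryV d ℓ)) (y : daryV d ℓ → Fin q) :
    ∀ (h : ℕ) (u : daryV d ℓ), dep u + h = ℓ →
      (∃ κ, ∀ a, FF M (wS S y) u a = κ) ∨
      (∃ (t : ℕ) (φ : Fin q → ℝ), t ≤ k - 1 ∧
        (∀ a, FF M (wS S y) u a = ∑ b, (M^t) a b * φ b) ∧
        2 ^ ((ℓ - dep u - t + (k-2)) / (k-1)) ≤ cnt S u) := by
  intro h
  induction h with
  | zero =>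
    intro u hu
    have hleaf : dep u = ℓ := by omega
    by_cases hu' : u ∈ S
    · right
      refine ⟨0, fun b => if b = y u then (1:ℝ) else 0, by omega, fun a => ?_, ?_⟩
      · rw [FF_leaf M _ u hleaf a, pow_zero]
        simp [wS, hu', Matrix.one_apply, ite_mul]
      · have he : ℓ - dep u - 0 + (k-2) = k-2 := by omega
        rw [he, Nat.div_eq_of_lt (by omega), pow_zero]
        exact cnt_mem S hu'
    · left
      exact ⟨1, fun a => by rw [FF_leaf M _ u hleaf a]; simp [wS, hu']⟩
  | succ h ih =>
    intro u hu
    have hlt : dep u < ℓ := by omega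
    set W := wS S y with hW
    set g : Fin d → Fin q → ℝ := fun j a => ∑ b, M a b * FF M W (child u hlt j) b with hg
    have hFF : ∀ a, FF M W u a = ∏ j, g j a := fun a => FF_node M W u hlt a
    have hdich : ∀ j : Fin d, (∃ κ, ∀ a, g j a = κ) ∨
        (∃ (t : ℕ) (φ : Fin q → ℝ), 1 ≤ t ∧ t ≤ k - 1 ∧
          (∀ a, g j a = ∑ b, (M^t) a b * φ b) ∧
          2 ^ ((ℓ - dep u - t + (k-2)) / (k-1)) ≤ cnt S (child u hlt j)) := by
      intro j
      rcases ih (child u hlt j) (by simp only [dep_child]; omega) with ⟨κ, hκ⟩ |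
        ⟨t, φ, ht, hrep, hcnt⟩
      · left
        refine ⟨κ, fun a => ?_⟩
        calc g j a = ∑ b, M a b * κ := Finset.sum_congr rfl fun b _ => by rw [hκ b]
          _ = κ := by rw [← Finset.sum_mul, hM a, one_mul]
      · have hga : ∀ a, g j a = ∑ b', (M^(t+1)) a b' * φ b' := by
          intro a
          calc g j a = ∑ b, M a b * ∑ b', (M^t) b b' * φ b' :=
                Finset.sum_congr rfl fun b _ => by rw [hrep b]
            _ = ∑ b, ∑ b', M a b * ((M^t) b b' * φ b') :=
                Finset.sum_congr rfl fun b _ => Finset.mul_sum _ _ _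
            _ = ∑ b', ∑ b, M a b * ((M^t) b b' * φ b') := Finset.sum_comm
            _ = ∑ b', (M^(t+1)) a b' * φ b' := by
                refine Finset.sum_congr rfl fun b' _ => ?_
                rw [pow_succ', Matrix.mul_apply, Finset.sum_mul]
                exact Finset.sum_congr rfl fun b _ => by ring
        by_cases htk : t + 1 = k
        · left
          refine ⟨∑ b', (M^k) ⟨0, hq⟩ b' * φ b', fun a => ?_⟩
          rw [hga a]
          rw [show t + 1 = k from htk]
          exact Finset.sum_congr rfl fun b' _ => by rw [hMk a ⟨0, hq⟩ b']
        · right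
          refine ⟨t+1, φ, by omega, by omega, hga, ?_⟩
          have hE : ℓ - dep (child u hlt j) - t = ℓ - dep u - (t+1) := by
            simp only [dep_child]; omega
          rwa [hE] at hcnt
    by_cases hall : ∀ j, ∃ κ, ∀ a, g j a = κ
    · left
      choose κf hκf using hall
      exact ⟨∏ j, κf j, fun a => by
        rw [hFF a]; exact Finset.prod_congr rfl fun j _ => hκf j a⟩
    · rw [not_forall] at hall
      obtain ⟨j₀, hj₀⟩ := hall
      obtain ⟨t₀, φ₀, ht₀1, ht₀, hga₀, hcnt₀⟩ := (hdich j₀).resolve_left hj₀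
      by_cases hone : ∀ j, j ≠ j₀ → ∃ κ, ∀ a, g j a = κ
      · right
        choose κf hκf using hone
        refine ⟨t₀, fun b => φ₀ b * ∏ j ∈ Finset.univ.erase j₀,
          (if hj : j = j₀ then 0 else κf j hj), ht₀, fun a => ?_, ?_⟩
        · rw [hFF a, ← Finset.mul_prod_erase Finset.univ _ (Finset.mem_univ j₀)]
          have hKe : ∏ j ∈ Finset.univ.erase j₀, g j a
              = ∏ j ∈ Finset.univ.erase j₀, (if hj : j = j₀ then 0 else κf j hj) := by
            refine Finset.prod_congr rfl fun j hj => ?_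
            have hjne : j ≠ j₀ := (Finset.mem_erase.1 hj).1
            rw [dif_neg hjne]
            exact hκf j hjne a
          rw [hKe, hga₀ a, Finset.sum_mul]
          exact Finset.sum_congr rfl fun b _ => by ring
        · exact le_trans hcnt₀ (cnt_child_le S hlt j₀)
      · right
        rw [not_forall] at hone
        obtain ⟨j₁, hj₁'⟩ := hone
        rw [Classical.not_imp] at hj₁'
        obtain ⟨hne, hj₁⟩ := hj₁'
        obtain ⟨t₁, φ₁, ht₁1, ht₁, hga₁, hcnt₁⟩ := (hdich j₁).resolve_left hj₁
        refine ⟨0, fun b => FF M W u b, by omega, fun a => ?_, ?_⟩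
        · rw [pow_zero]
          rw [show ∑ b, (1 : Matrix (Fin q) (Fin q) ℝ) a b * FF M W u b = FF M W u a by
            simp [Matrix.one_apply, ite_mul]]
        · set E1 := (ℓ - dep u - (k-1) + (k-2)) / (k-1) with hE1
          have hmono : ∀ t', 1 ≤ t' → t' ≤ k - 1 → ∀ j : Fin d,
              2 ^ ((ℓ - dep u - t' + (k-2)) / (k-1)) ≤ cnt S (child u hlt j) →
              2 ^ E1 ≤ cnt S (child u hlt j) := by
            intro t' h1 h2 j hj
            refine le_trans ?_ hj
            exact Nat.pow_le_pow_right (by norm_num)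
              (Nat.div_le_div_right (by omega))
          have h0 := hmono t₀ ht₀1 ht₀ j₀ hcnt₀
          have h1 := hmono t₁ ht₁1 ht₁ j₁ hcnt₁
          have hsum : 2 ^ E1 + 2 ^ E1 ≤ cnt S u :=
            le_trans (add_le_add h1 h0) (cnt_two_children S hlt hne)
          refine le_trans ?_ hsum
          have harith : (ℓ - dep u - 0 + (k-2)) / (k-1) ≤ E1 + 1 := by
            rw [hE1]
            simp only [Nat.sub_zero]
            have := arith_step k hk (ℓ - dep u)
            omega
          calc 2 ^ ((ℓ - dep u - 0 + (k-2)) / (k-1)) ≤ 2 ^ (E1 + 1) :=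
              Nat.pow_le_pow_right (by norm_num) harith
            _ = 2 ^ E1 + 2 ^ E1 := by rw [pow_succ]; omega

end Key

section Master
variable {q : ℕ}

lemma emb0_eq_root (hn : (0:ℕ) ≤ ℓ) (s : Fin 0 → Fin d) : emb 0 hn s = daryRoot d ℓ :=
  Sigma.ext rfl (heq_of_eq (funext fun i => i.elim0))

lemma master (M : Matrix (Fin q) (Fin q) ℝ) (ν : Fin q → ℝ) (w : daryV d ℓ → Fin q → ℝ)
    (g : Fin q → ℝ) (hd0 : 0 < d) :
    ∑ x : daryV d ℓ → Fin q,
      (ν (x (daryRoot d ℓ)) *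
        ∏ v ∈ Finset.univ.filter (fun v => v ≠ daryRoot d ℓ), M (x (daryPar d ℓ v)) (x v)) *
      ((∏ s : Fin ℓ → Fin d, w (emb ℓ le_rfl s) (x (emb ℓ le_rfl s))) * g (x (daryRoot d ℓ)))
    = ∑ c : Fin q, ν c * g c * FF M w (daryRoot d ℓ) c := by
  rw [sum_root_split]
  refine Finset.sum_congr rfl fun c _ => ?_
  show (∑ x' : Hi d ℓ 0 → Fin q,
      (ν (Atot hd0 0 (fun _ => c) x' (daryRoot d ℓ)) *
        ∏ v ∈ Finset.univ.filter (fun v => v ≠ daryRoot d ℓ),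
          M (Atot hd0 0 (fun _ => c) x' (daryPar d ℓ v)) (Atot hd0 0 (fun _ => c) x' v)) *
      ((∏ s : Fin ℓ → Fin d, w (emb ℓ le_rfl s) (Atot hd0 0 (fun _ => c) x' (emb ℓ le_rfl s)))
        * g (Atot hd0 0 (fun _ => c) x' (daryRoot d ℓ))))
    = ν c * g c * FF M w (daryRoot d ℓ) c
  have hiff : ∀ v : daryV d ℓ, v ∈ Finset.univ.filter (fun v => v ≠ daryRoot d ℓ)
      ↔ 0 < dep v := by
    intro v
    rw [Finset.mem_filter]
    constructor
    · rintro ⟨-, hv⟩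
      rcases Nat.eq_zero_or_pos (dep v) with h0 | h0
      · exact absurd ((eq_root_iff v).2 h0) hv
      · exact h0
    · intro hv
      refine ⟨Finset.mem_univ _, fun hroot => ?_⟩
      rw [(eq_root_iff v).1 hroot] at hv
      exact absurd hv (by simp [daryRoot])
  have hroot : ∀ x' : Hi d ℓ 0 → Fin q, Atot hd0 0 (fun _ => c) x' (daryRoot d ℓ) = c :=
    fun x' => dif_neg (lt_irrefl 0)
  calc (∑ x' : Hi d ℓ 0 → Fin q,
      (ν (Atot hd0 0 (fun _ => c) x' (daryRoot d ℓ)) *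
        ∏ v ∈ Finset.univ.filter (fun v => v ≠ daryRoot d ℓ),
          M (Atot hd0 0 (fun _ => c) x' (daryPar d ℓ v)) (Atot hd0 0 (fun _ => c) x' v)) *
      ((∏ s : Fin ℓ → Fin d, w (emb ℓ le_rfl s) (Atot hd0 0 (fun _ => c) x' (emb ℓ le_rfl s)))
        * g (Atot hd0 0 (fun _ => c) x' (daryRoot d ℓ))))
      = ∑ x' : Hi d ℓ 0 → Fin q, (ν c * g c) *
          ((∏ v : Hi d ℓ 0, M (Atot hd0 0 (fun _ => c) x' (daryPar d ℓ v.1))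
              (Atot hd0 0 (fun _ => c) x' v.1)) *
            ∏ s : Fin ℓ → Fin d, w (emb ℓ le_rfl s)
              (Atot hd0 0 (fun _ => c) x' (emb ℓ le_rfl s))) := by
        refine Finset.sum_congr rfl fun x' _ => ?_
        rw [hroot x', Finset.prod_subtype _ hiff
          (fun v => M (Atot hd0 0 (fun _ => c) x' (daryPar d ℓ v))
            (Atot hd0 0 (fun _ => c) x' v))]
        ring
    _ = (ν c * g c) * lhsB M w hd0 0 (fun _ => c) := by
        rw [← Finset.mul_sum]
        rfl
    _ = ν c * g c * FF M w (daryRoot d ℓ) c := by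
        rw [claimF M w hd0 ℓ 0 (by omega) (fun _ => c), Fintype.prod_unique]
        rw [emb0_eq_root]

set_option maxHeartbeats 1000000 in
lemma ind_eq_leafprod (S : Finset (daryV d ℓ)) (hSleaf : ∀ v ∈ S, dep v = ℓ)
    (y : daryV d ℓ → Fin q) (x : daryV d ℓ → Fin q) :
    (if ∀ v ∈ S, x v = y v then (1:ℝ) else 0)
      = ∏ s : Fin ℓ → Fin d, wS S y (emb ℓ le_rfl s) (x (emb ℓ le_rfl s)) := by
  have hinj : Function.Injective (emb ℓ (le_refl ℓ) : (Fin ℓ → Fin d) → daryV d ℓ) := by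
    intro s s' h
    unfold emb at h
    injection h
  have h1 : (if ∀ v ∈ S, x v = y v then (1:ℝ) else 0)
      = ∏ v ∈ S, (if x v = y v then (1:ℝ) else 0) := by
    by_cases hall : ∀ v ∈ S, x v = y v
    · rw [if_pos hall]
      symm
      exact Finset.prod_eq_one fun v hv => if_pos (hall v hv)
    · rw [if_neg hall]
      push_neg at hall
      obtain ⟨v, hv, hne⟩ := hall
      symm
      exact Finset.prod_eq_zero hv (if_neg hne)
  have h2 : (∏ v ∈ S, (if x v = y v then (1:ℝ) else 0))
      = ∏ v ∈ Finset.univ, wS S y v (x v) := by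
    rw [show (∏ v ∈ Finset.univ, wS S y v (x v))
        = ∏ v ∈ Finset.univ, (if v ∈ S then (if x v = y v then (1:ℝ) else 0) else 1) from rfl,
      Finset.prod_ite_mem Finset.univ S (fun v => if x v = y v then (1:ℝ) else 0),
      Finset.univ_inter]
  have h3 : (∏ v ∈ Finset.univ, wS S y v (x v))
      = ∏ v ∈ Finset.univ.map ⟨emb ℓ le_rfl, hinj⟩, wS S y v (x v) := by
    symm
    apply Finset.prod_subset (Finset.subset_univ _)
    intro v _ hv
    have hvS : v ∉ S := by
      intro hvS
      apply hv
      rw [Finset.mem_map]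
      exact ⟨fun i => v.2 (Fin.cast (hSleaf v hvS).symm i), Finset.mem_univ _,
        emb_eta v (hSleaf v hvS) le_rfl⟩
    simp [wS, hvS]
  have h4 : (∏ v ∈ Finset.univ.map ⟨emb ℓ le_rfl, hinj⟩, wS S y v (x v))
      = ∏ s : Fin ℓ → Fin d, wS S y (emb ℓ le_rfl s) (x (emb ℓ le_rfl s)) :=
    Finset.prod_map _ _ _
  rw [h1, h2, h3, h4]

lemma pow_row_sum (M : Matrix (Fin q) (Fin q) ℝ) (hM : ∀ i, ∑ j, M i j = 1) :
    ∀ (n : ℕ) (i : Fin q), ∑ j, (M^n) i j = 1 := by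
  intro n
  induction n with
  | zero => intro i; simp [Matrix.one_apply]
  | succ n ih =>
    intro i
    calc ∑ j, (M^(n+1)) i j = ∑ j, ∑ b, (M^n) i b * M b j := by
          simp [pow_succ, Matrix.mul_apply]
      _ = ∑ b, ∑ j, (M^n) i b * M b j := Finset.sum_comm
      _ = ∑ b, (M^n) i b * ∑ j, M b j :=
          Finset.sum_congr rfl fun b _ => (Finset.mul_sum _ _ _).symm
      _ = 1 := by simp only [hM, mul_one]; exact ih i

theorem eq_rows_of_rank_one {q : ℕ} (hq : 1 ≤ q) (A : Matrix (Fin q) (Fin q) ℝ)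
    (hA : ∀ i, ∑ j, A i j = 1) (hrank : A.rank = 1) :
    ∀ i i' j, A i j = A i' j := by
  have hones : A.mulVec (fun _ => 1) = fun _ => 1 := by
    funext i; simp [Matrix.mulVec, dotProduct, hA]
  have h1 : (fun _ => (1:ℝ)) ≠ (0 : Fin q → ℝ) := by
    intro h
    have := congrFun h ⟨0, hq⟩
    simp at this
  have hmem : (fun _ => (1:ℝ)) ∈ LinearMap.range A.mulVecLin := ⟨fun _ => 1, hones⟩
  have hle : Submodule.span ℝ {(fun _ => (1:ℝ) : Fin q → ℝ)} ≤ LinearMap.range A.mulVecLin := by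
    rw [Submodule.span_singleton_le_iff_mem]; exact hmem
  have hfr : Module.finrank ℝ (LinearMap.range A.mulVecLin) = 1 := hrank
  have heq : Submodule.span ℝ {(fun _ => (1:ℝ) : Fin q → ℝ)} = LinearMap.range A.mulVecLin := by
    apply Submodule.eq_of_le_of_finrank_le hle
    rw [hfr, finrank_span_singleton h1]
  intro i i' j
  have hcol : A.mulVec (Pi.single j 1) ∈ LinearMap.range A.mulVecLin := ⟨_, rfl⟩
  rw [← heq, Submodule.mem_span_singleton] at hcol
  obtain ⟨cc, hc⟩ := hcol
  have hi := congrFun hc i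
  have hi' := congrFun hc i'
  simp [Matrix.mulVec_single] at hi hi'
  rw [← hi, ← hi']

end Master
end BCproof

/-- if `M^k` is rank one, then for any subset `S` of the leaves of the complete
`d`-ary tree of depth `ℓ` with `|S| < 2^⌊(ℓ-1)/(k-1)⌋`, the vector `X_S` is independent of
the root value `X_ρ` under the broadcast process with any root prior `ν`. -/
theorem stmt0 (q : ℕ) (hq : 1 ≤ q) (M : Matrix (Fin q) (Fin q) ℝ) (hM : RowStochastic M)
    (k : ℕ) (hk : 2 ≤ k) (hrank : (M ^ k).rank = 1)
    (d ℓ : ℕ) (hd : 2 ≤ d) (hℓ : 1 ≤ ℓ)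
    (ν : Fin q → ℝ) (hν : IsProbVec ν)
    (S : Finset (Dary d ℓ).V) (hSleaf : ∀ v ∈ S, (Dary d ℓ).depth v = ℓ)
    (hScard : S.card < 2 ^ ((ℓ - 1) / (k - 1))) :
    ∀ (y : (Dary d ℓ).V → Fin q) (c : Fin q),
      (∑ x : (Dary d ℓ).V → Fin q,
          bcast M (Dary d ℓ) ν x *
            ((if ∀ v ∈ S, x v = y v then (1 : ℝ) else 0) *
              (if x (Dary d ℓ).root = c then 1 else 0)))
        = (∑ x : (Dary d ℓ).V → Fin q,
            bcast M (Dary d ℓ) ν x * (if ∀ v ∈ S, x v = y v then (1 : ℝ) else 0)) *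
          (∑ x : (Dary d ℓ).V → Fin q,
            bcast M (Dary d ℓ) ν x * (if x (Dary d ℓ).root = c then 1 else 0)) := by
  intro y c
  have hd0 : 0 < d := by omega
  have hrowsum : ∀ i, ∑ j, M i j = 1 := hM.2
  have hMk : ∀ i i' j, (M^k) i j = (M^k) i' j :=
    BCproof.eq_rows_of_rank_one hq (M^k) (BCproof.pow_row_sum M hrowsum k) hrank
  obtain ⟨κ, hκ⟩ : ∃ κ, ∀ a, BCproof.FF M (BCproof.wS S y) (daryRoot d ℓ) a = κ := by
    rcases BCproof.key M hrowsum hq k hk hMk S y ℓ (daryRoot d ℓ) (zero_add ℓ) with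
      hc | ⟨t, φ, ht, -, hcnt⟩
    · exact hc
    · exfalso
      replace hcnt := hcnt.trans_eq (BCproof.cnt_root (d := d) (ℓ := ℓ) S : _ = S.card)
      have hdr : BCproof.dep (daryRoot d ℓ) = 0 := rfl
      rw [hdr] at hcnt
      have hexp : (ℓ-1)/(k-1) ≤ (ℓ - 0 - t + (k-2))/(k-1) :=
        Nat.div_le_div_right (by omega)
      have hpow := Nat.pow_le_pow_right (by norm_num : 1 ≤ 2) hexp
      exact absurd (hScard.trans_le (hpow.trans hcnt)) (lt_irrefl _)
  have hm1 := BCproof.master M ν (BCproof.wS S y) (fun b => if b = c then (1:ℝ) else 0) hd0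
  have hm2 := BCproof.master M ν (BCproof.wS S y) (fun _ => (1:ℝ)) hd0
  have hm3 := BCproof.master (d := d) (ℓ := ℓ) M ν (fun _ _ => (1:ℝ)) (fun b => if b = c then (1:ℝ) else 0) hd0
  have hRHS1 : (∑ c' : Fin q, ν c' * (if c' = c then (1:ℝ) else 0) *
      BCproof.FF M (BCproof.wS S y) (daryRoot d ℓ) c') = ν c * κ := by
    refine (Finset.sum_congr rfl fun c' _ => by rw [hκ c']).trans ?_
    simp [mul_ite, ite_mul, mul_zero, zero_mul, mul_one]
  have hRHS2 : (∑ c' : Fin q, ν c' * (1:ℝ) *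
      BCproof.FF M (BCproof.wS S y) (daryRoot d ℓ) c') = κ := by
    refine (Finset.sum_congr rfl fun c' _ => by rw [hκ c', mul_one]).trans ?_
    rw [← Finset.sum_mul, hν.2, one_mul]
  have hRHS3 : (∑ c' : Fin q, ν c' * (if c' = c then (1:ℝ) else 0) *
      BCproof.FF M (fun _ _ => (1:ℝ)) (daryRoot d ℓ) c') = ν c := by
    refine (Finset.sum_congr rfl fun c' _ => by
      rw [BCproof.FF_one M hrowsum, mul_one]).trans ?_
    simp [mul_ite, ite_mul, mul_zero, zero_mul, mul_one]
  have hT1 : (∑ x : (Dary d ℓ).V → Fin q,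
      bcast M (Dary d ℓ) ν x *
        ((if ∀ v ∈ S, x v = y v then (1 : ℝ) else 0) *
          (if x (Dary d ℓ).root = c then 1 else 0))) = ν c * κ := by
    show (∑ x : (Dary d ℓ).V → Fin q,
      (ν (x (daryRoot d ℓ)) *
        ∏ v ∈ Finset.univ.filter (fun v => v ≠ daryRoot d ℓ), M (x (daryPar d ℓ v)) (x v)) *
        ((if ∀ v ∈ S, x v = y v then (1 : ℝ) else 0) *
          (if x (daryRoot d ℓ) = c then 1 else 0))) = ν c * κ
    refine Eq.trans (Finset.sum_congr rfl fun x _ => ?_) (hm1.trans hRHS1)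
    refine congrArg₂ (· * ·) rfl (congrArg₂ (· * ·) ?_ rfl)
    exact BCproof.ind_eq_leafprod S (fun v hv => hSleaf v hv) y x
  have hT2 : (∑ x : (Dary d ℓ).V → Fin q,
      bcast M (Dary d ℓ) ν x * (if ∀ v ∈ S, x v = y v then (1 : ℝ) else 0)) = κ := by
    show (∑ x : (Dary d ℓ).V → Fin q,
      (ν (x (daryRoot d ℓ)) *
        ∏ v ∈ Finset.univ.filter (fun v => v ≠ daryRoot d ℓ), M (x (daryPar d ℓ v)) (x v)) *
        (if ∀ v ∈ S, x v = y v then (1 : ℝ) else 0)) = κ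
    refine Eq.trans (Finset.sum_congr rfl fun x _ => ?_) (hm2.trans hRHS2)
    refine congrArg₂ (· * ·) rfl ?_
    exact (BCproof.ind_eq_leafprod S (fun v hv => hSleaf v hv) y x).trans (mul_one _).symm
  have hT3 : (∑ x : (Dary d ℓ).V → Fin q,
      bcast M (Dary d ℓ) ν x * (if x (Dary d ℓ).root = c then (1 : ℝ) else 0)) = ν c := by
    show (∑ x : daryV d ℓ → Fin q,
      (ν (x (daryRoot d ℓ)) *
        ∏ v ∈ Finset.univ.filter (fun v => v ≠ daryRoot d ℓ), M (x (daryPar d ℓ v)) (x v)) *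
        (if x (daryRoot d ℓ) = c then (1 : ℝ) else 0)) = ν c
    refine Eq.trans (Finset.sum_congr rfl fun x _ => ?_) (hm3.trans hRHS3)
    refine congrArg₂ (· * ·) rfl ?_
    exact Eq.trans (one_mul _).symm (congrArg₂ (· * ·) Finset.prod_const_one.symm rfl)
  rw [hT1, hT2, hT3]
  ring
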